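/- For every integer A ≥ 4 and every t ∈ [0, π/2], if |sin(A·t)/(A·sin(t))| ≥ 1/3 then t ≤ π/A. (For t = 0 interpret sin(A·t)/(A·sin(t)) as its continuous extension, which equals 1.) -/

import Mathlib

open Real Set

lemma sin_cubic_lb {x : ℝ} (hx0 : 0 ≤ x) : x - x ^ 3 / 6 ≤ Real.sin x := by
  have hd : ∀ y : ℝ, HasDerivAt (fun z => Real.sin z - z + z ^ 3 / 6)
      (Real.cos y - 1 + y ^ 2 / 2) y := by
    intro y
    have h1 := ((Real.hasDerivAt_sin y).sub (hasDerivAt_id y)).add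
      ((hasDerivAt_pow 3 y).div_const 6)
    refine h1.congr_deriv ?_
    simp
    ring
  have mono : MonotoneOn (fun z => Real.sin z - z + z ^ 3 / 6) (Set.Ici (0:ℝ)) := by
    apply monotoneOn_of_deriv_nonneg (convex_Ici 0)
    · exact (Continuous.continuousOn (by continuity))
    · intro y hy
      exact ((hd y).differentiableAt).differentiableWithinAt
    · intro y hy
      rw [(hd y).deriv]
      have := Real.one_sub_sq_div_two_le_cos (x := y)
      linarith
  have h0 : (fun z => Real.sin z - z + z ^ 3 / 6) 0 ≤
      (fun z => Real.sin z - z + z ^ 3 / 6) x :=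
    mono (Set.self_mem_Ici) (Set.mem_Ici.mpr hx0) hx0
  simp at h0
  linarith

theorem GA_bigger_one_third (A : ℤ) (hA : 4 ≤ A) (t : ℝ) (ht : t ∈ Set.Icc 0 (π / 2))
    (h : (1 : ℝ) / 3 ≤ |if t = 0 then 1 else Real.sin (A * t) / (A * Real.sin t)|) :
    t ≤ π / A := by
  by_contra hgt
  push_neg at hgt
  obtain ⟨ht0, htpi⟩ := ht
  have hA4 : (4:ℝ) ≤ (A:ℝ) := by exact_mod_cast hA
  have hApos : (0:ℝ) < A := by linarith
  have hpi := Real.pi_pos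
  have htpos : 0 < t := lt_trans (by positivity) hgt
  rw [if_neg htpos.ne'] at h
  set s : ℝ := (A : ℝ) * t with hs_def
  have hspi : π < s := by
    have := (div_lt_iff₀ hApos).mp hgt
    linarith [this]
  have hsint : 0 < Real.sin t :=
    Real.sin_pos_of_pos_of_lt_pi htpos (by linarith)
  have hAst : 0 < (A:ℝ) * Real.sin t := by positivity
  have hpil : 3.141592 < π := Real.pi_gt_d6
  have hpiu : π < 3.15 := Real.pi_lt_d2
  -- key inequality
  have key : 3 * |Real.sin s| < (A:ℝ) * Real.sin t := by
    rcases le_or_gt s 5 with hs5 | hs5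
    · -- s ≤ 5, so t ≤ 5/4
      have ht54 : t ≤ 5 / 4 := by nlinarith
      have hlb : s - s ^ 3 / 96 ≤ (A:ℝ) * Real.sin t := by
        have h1 : t - t ^ 3 / 6 ≤ Real.sin t := sin_cubic_lb ht0
        have h2 : (A:ℝ) * (t - t ^ 3 / 6) ≤ (A:ℝ) * Real.sin t :=
          mul_le_mul_of_nonneg_left h1 (le_of_lt hApos)
        have ht_le : t ≤ s / 4 := by
          rw [hs_def]; nlinarith
        -- A*t - A*t^3/6 = s - s*t^2/6 ≥ s - s^3/96
        have h3 : s * t ^ 2 / 6 ≤ s ^ 3 / 96 := by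
          have hs0 : 0 < s := by linarith
          nlinarith [sq_nonneg t, sq_nonneg (s/4 - t)]
        have h4 : (A:ℝ) * (t - t ^ 3 / 6) = s - s * t ^ 2 / 6 := by
          rw [hs_def]; ring
        linarith
      have hub : |Real.sin s| ≤ s - π := by
        have h1 : Real.sin (s - π) = -Real.sin s := Real.sin_sub_pi s
        have h2 : 0 ≤ Real.sin (s - π) := by
          apply Real.sin_nonneg_of_nonneg_of_le_pi <;> nlinarith
        have h3 : |Real.sin s| = Real.sin (s - π) := by
          rw [abs_of_nonpos (by linarith), h1]
        rw [h3]
        have := Real.sin_le (x := s - π) (by linarith)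
        linarith
      rcases le_or_gt s 4.2 with hs42 | hs42
      · -- 3*(s-π) < s - s^3/96
        have : 3 * (s - π) < s - s ^ 3 / 96 := by
          nlinarith [mul_nonneg (sub_nonneg.mpr hs42 : (0:ℝ) ≤ 4.2 - s)
            (sub_nonneg.mpr hspi.le), sq_nonneg (s - 4.2), sq_nonneg (s - π)]
        calc 3 * |Real.sin s| ≤ 3 * (s - π) := by linarith
          _ < s - s ^ 3 / 96 := this
          _ ≤ (A:ℝ) * Real.sin t := hlb
      · -- 4.2 < s ≤ 5 : 3 < s - s^3/96
        have h1 : |Real.sin s| ≤ 1 := Real.abs_sin_le_one s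
        have : (3:ℝ) < s - s ^ 3 / 96 := by
          nlinarith [mul_nonneg (sub_nonneg.mpr hs5 : (0:ℝ) ≤ 5 - s)
            (sub_nonneg.mpr hs42.le : (0:ℝ) ≤ s - 4.2)]
        calc 3 * |Real.sin s| ≤ 3 := by linarith
          _ < s - s ^ 3 / 96 := this
          _ ≤ (A:ℝ) * Real.sin t := hlb
    · -- s > 5 : A sin t ≥ (2/π) s > 10/π > 3
      have h1 : 2 / π * t ≤ Real.sin t := Real.mul_le_sin ht0 htpi
      have h2 : 2 / π * s ≤ (A:ℝ) * Real.sin t := by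
        have := mul_le_mul_of_nonneg_left h1 (le_of_lt hApos)
        calc 2 / π * s = (A:ℝ) * (2 / π * t) := by rw [hs_def]; ring
          _ ≤ (A:ℝ) * Real.sin t := this
      have h3 : (3:ℝ) < 2 / π * s := by
        rw [div_mul_eq_mul_div, lt_div_iff₀ hpi]
        nlinarith
      have h4 : |Real.sin s| ≤ 1 := Real.abs_sin_le_one s
      linarith
  -- contradiction with h
  have habs : |Real.sin s / ((A:ℝ) * Real.sin t)| = |Real.sin s| / ((A:ℝ) * Real.sin t) := by
    rw [abs_div, abs_of_pos hAst]
  rw [habs] at h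
  have h2 : 1 / 3 * ((A:ℝ) * Real.sin t) ≤ |Real.sin s| := (le_div_iff₀ hAst).mp h
  linarith
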